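/- Let φ be a CNF in the QEALM fragment. Then φ is satisfiable if and only if there is a choice of one component K_C of each clause C of φ such that the conjunction of the chosen components K_C over all C ∈ φ is satisfiable. -/

import Mathlib

/-- Terms over variables `V` and constant symbols `K`
(Bernays–Schönfinkel: the only function symbols are constants). -/
inductive Trm (V K : Type) : Type where
  | var : V → Trm V K
  | const : K → Trm V K
deriving DecidableEq

/-- A first-order literal (no equality): a polarity, a predicate symbol
and a list of argument terms. -/
structure Lit (V K P : Type) : Type where
  pol : Bool
  pred : P
  args : List (Trm V K)
deriving DecidableEq

/-- A clause is a (finite) set of literals, read disjunctively. -/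
abbrev Clause (V K P : Type) := Finset (Lit V K P)

/-- A CNF is a list of clauses, read conjunctively,
with all variables universally quantified. -/
abbrev CNF (V K P : Type) := List (Clause V K P)

variable {V K P : Type}

/-- The argument of a literal at the (1-based) position `i`. -/
def Lit.argAt (l : Lit V K P) : ℕ → Option (Trm V K)
  | 0 => none
  | i + 1 => l.args[i]?

/-- Variable `u` occurs at argument position `i` of the literal `l`. -/
def Lit.varAt (l : Lit V K P) (u : V) (i : ℕ) : Prop := l.argAt i = some (Trm.var u)

/-- Variable `u` occurs in the literal `l`. -/
def Lit.hasVar (l : Lit V K P) (u : V) : Prop := ∃ i, l.varAt u i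

/-- `i` is the least argument position at which `u` occurs in `l`. -/
def Lit.firstOccAt (l : Lit V K P) (u : V) (i : ℕ) : Prop :=
  l.varAt u i ∧ ∀ j, l.varAt u j → i ≤ j

/-- The QEALM clause condition: whenever a variable `u` occurs in several
literals of the clause, the least position at which it occurs is the same in
all these literals, and these literals agree on all argument positions up to
(and including) that one (a shared initial segment). -/
def QEALMClause (C : Clause V K P) : Prop :=
  ∀ (u : V), ∀ l₁ ∈ C, ∀ l₂ ∈ C, l₁.hasVar u → l₂.hasVar u →
    ∃ i, l₁.firstOccAt u i ∧ l₂.firstOccAt u i ∧ ∀ j ≤ i, l₁.argAt j = l₂.argAt j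

/-- A CNF is in the QEALM fragment iff every clause satisfies the QEALM clause condition. -/
def QEALM (φ : CNF V K P) : Prop := ∀ C ∈ φ, QEALMClause C

/-- A first-order structure for the signature `(K, P)` (no equality). -/
structure Model (K P : Type) : Type 1 where
  Dom : Type
  dne : Nonempty Dom
  constVal : K → Dom
  predVal : P → List Dom → Prop

/-- Value of a term in a model under a variable assignment. -/
def Trm.val (M : Model K P) (ρ : V → M.Dom) : Trm V K → M.Dom
  | .var u => ρ u
  | .const c => M.constVal c

/-- Truth of a literal in a model under a variable assignment. -/
def Lit.holds (M : Model K P) (ρ : V → M.Dom) (l : Lit V K P) : Prop :=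
  if l.pol then M.predVal l.pred (l.args.map (Trm.val M ρ))
  else ¬ M.predVal l.pred (l.args.map (Trm.val M ρ))

/-- Truth of a clause (a disjunction of literals). -/
def Clause.holds (M : Model K P) (ρ : V → M.Dom) (C : Clause V K P) : Prop :=
  ∃ l ∈ C, l.holds M ρ

/-- First-order satisfiability (without equality) of a universally quantified CNF. -/
def CNF.Satisfiable (φ : CNF V K P) : Prop :=
  ∃ M : Model K P, ∀ ρ : V → M.Dom, ∀ C ∈ φ, C.holds M ρ

/-- Applying a substitution to a term. -/
def Trm.subst (σ : V → Trm V K) : Trm V K → Trm V K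
  | .var u => σ u
  | .const c => .const c

/-- Applying a substitution to a literal. -/
def Lit.subst (σ : V → Trm V K) (l : Lit V K P) : Lit V K P :=
  ⟨l.pol, l.pred, l.args.map (Trm.subst σ)⟩

/-- Applying a substitution to a clause. -/
def Clause.subst [DecidableEq V] [DecidableEq K] [DecidableEq P]
    (σ : V → Trm V K) (C : Clause V K P) : Clause V K P :=
  C.image (Lit.subst σ)

/-- Applying a substitution to a CNF. -/
def CNF.subst [DecidableEq V] [DecidableEq K] [DecidableEq P]
    (σ : V → Trm V K) (φ : CNF V K P) : CNF V K P :=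
  φ.map (Clause.subst σ)

/-- An outer variable of a clause: a variable appearing in every literal of the clause. -/
def OuterVar (C : Clause V K P) (u : V) : Prop := ∀ l ∈ C, l.hasVar u

/-- `i` is the least position of an occurrence of `u` in any literal of `C`. -/
def LeastOccIn (C : Clause V K P) (u : V) (i : ℕ) : Prop :=
  (∃ l ∈ C, l.varAt u i) ∧ ∀ j, (∃ l ∈ C, l.varAt u j) → i ≤ j

/-- `i` is an outer position of the clause `C`. -/
def OuterPosClause (C : Clause V K P) (i : ℕ) : Prop :=
  ∃ u : V, OuterVar C u ∧ LeastOccIn C u i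

/-- `i` is a neutral position of the clause `C`: some term `t`, a constant or an
outer variable of `C`, occupies the `i`-th argument of every literal of `C`. -/
def NeutralPos (C : Clause V K P) (i : ℕ) : Prop :=
  ∃ t : Trm V K,
    ((∃ c, t = Trm.const c) ∨ (∃ u, t = Trm.var u ∧ OuterVar C u)) ∧
    ∀ l ∈ C, l.argAt i = some t

/-- `i` is an outer position of the CNF `φ`: an outer position of some clause and a
neutral position of every clause. -/
def OuterPosCNF (φ : CNF V K P) (i : ℕ) : Prop :=
  (∃ C ∈ φ, OuterPosClause C i) ∧ ∀ D ∈ φ, NeutralPos D i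

/-- Variable `u` occurs at argument position `i` in some literal of `φ`. -/
def VarOccursAt (φ : CNF V K P) (u : V) (i : ℕ) : Prop :=
  ∃ C ∈ φ, ∃ l ∈ C, l.varAt u i

/-- `σ` is the substitution that replaces every variable occurring at an argument
position `i` that is an outer position of `φ` by the constant `c i`, and leaves
all other variables unchanged. -/
def IsOuterSubst (φ : CNF V K P) (c : ℕ → K) (σ : V → Trm V K) : Prop :=
  (∀ u i, OuterPosCNF φ i → VarOccursAt φ u i → σ u = Trm.const (c i)) ∧
  (∀ u, (¬ ∃ i, OuterPosCNF φ i ∧ VarOccursAt φ u i) → σ u = Trm.var u)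

/-- A clause is inseparable if it is a single literal or some variable occurs in
every literal of the clause. -/
def InsepClause (C : Clause V K P) : Prop :=
  (∃ l, C = {l}) ∨ ∃ u : V, ∀ l ∈ C, l.hasVar u

/-- `Kc` is a component of a clause `C`: a non-empty inseparable subclause of `C`
closed under sharing variables with literals of `C`. -/
def IsComponent (Kc C : Clause V K P) : Prop :=
  Kc.Nonempty ∧ Kc ⊆ C ∧ InsepClause Kc ∧
    ∀ a ∈ Kc, ∀ b ∈ C, (∃ u : V, a.hasVar u ∧ b.hasVar u) → b ∈ Kc

/-- All variables shared between `l₁` and `l₂` occur as arguments in positions `≤ m`. -/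
def SharesUpTo (l₁ l₂ : Lit V K P) (m : ℕ) : Prop :=
  ∀ u : V, l₁.hasVar u → l₂.hasVar u →
    (∃ j ≤ m, l₁.varAt u j) ∧ (∃ j ≤ m, l₂.varAt u j)

/-- `i` is a fork index of `φ`: for some clause `C` of `φ` and literals `l₁, l₂` of
`C` (not necessarily distinct), `i` is the minimal value such that every variable
shared between `l₁` and `l₂` occurs at some argument position `≤ i`.  In particular,
`0` is a fork index if some such pair shares no variables. -/
def ForkIndex (φ : CNF V K P) (i : ℕ) : Prop :=
  ∃ C ∈ φ, ∃ l₁ ∈ C, ∃ l₂ ∈ C, IsLeast {m | SharesUpTo l₁ l₂ m} i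

section Aux

attribute [local instance] Classical.propDecidable

/-- Two literals are related if they are equal or share a variable. -/
def LRel (a b : Lit V K P) : Prop := a = b ∨ ∃ u, a.hasVar u ∧ b.hasVar u

lemma LRel.refl (a : Lit V K P) : LRel a a := Or.inl rfl

lemma LRel.symm {a b : Lit V K P} (h : LRel a b) : LRel b a := by
  rcases h with h | ⟨u, h1, h2⟩
  · exact Or.inl h.symm
  · exact Or.inr ⟨u, h2, h1⟩

lemma LRel.trans {C : Clause V K P} (hq : QEALMClause C) {a b c : Lit V K P}
    (ha : a ∈ C) (hb : b ∈ C) (hc : c ∈ C)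
    (h1 : LRel a b) (h2 : LRel b c) : LRel a c := by
  rcases h1 with rfl | ⟨u, hau, hbu⟩
  · exact h2
  rcases h2 with rfl | ⟨v, hbv, hcv⟩
  · exact Or.inr ⟨u, hau, hbu⟩
  obtain ⟨i, hai, hbi, hpre⟩ := hq u a ha b hb hau hbu
  obtain ⟨j, hbj, hcj, hpre'⟩ := hq v b hb c hc hbv hcv
  rcases le_total i j with hij | hij
  · refine Or.inr ⟨u, hau, i, ?_⟩
    have : b.argAt i = c.argAt i := hpre' i hij
    rw [Lit.varAt, ← this]
    exact hbi.1
  · refine Or.inr ⟨v, ⟨j, ?_⟩, hcv⟩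
    have : a.argAt j = b.argAt j := hpre j hij
    rw [Lit.varAt, this]
    exact hbj.1

/-- The component of the literal `a` within the clause `C`. -/
noncomputable def comp (C : Clause V K P) (a : Lit V K P) : Clause V K P :=
  C.filter (LRel a)

lemma mem_comp {C : Clause V K P} {a b : Lit V K P} :
    b ∈ comp C a ↔ b ∈ C ∧ LRel a b := Finset.mem_filter

lemma self_mem_comp {C : Clause V K P} {a : Lit V K P} (ha : a ∈ C) :
    a ∈ comp C a := mem_comp.mpr ⟨ha, LRel.refl a⟩

lemma comp_eq {C : Clause V K P} (hq : QEALMClause C) {a b : Lit V K P}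
    (ha : a ∈ C) (hb : b ∈ C) (hab : LRel a b) : comp C a = comp C b := by
  ext x
  simp only [mem_comp]
  constructor
  · rintro ⟨hx, hax⟩
    exact ⟨hx, LRel.trans hq hb ha hx hab.symm hax⟩
  · rintro ⟨hx, hbx⟩
    exact ⟨hx, LRel.trans hq ha hb hx hab hbx⟩

lemma exists_firstOcc {l : Lit V K P} {u : V} (h : l.hasVar u) :
    ∃ i, l.firstOccAt u i :=
  ⟨Nat.find h, Nat.find_spec h, fun j hj => Nat.find_min' h hj⟩

lemma insep_comp {C : Clause V K P} (hq : QEALMClause C) {a : Lit V K P}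
    (ha : a ∈ C) : InsepClause (comp C a) := by
  by_cases hs : comp C a = {a}
  · exact Or.inl ⟨a, hs⟩
  right
  have hmem : a ∈ comp C a := self_mem_comp ha
  obtain ⟨b, hb, hba⟩ : ∃ b ∈ comp C a, b ≠ a := by
    by_contra h
    push_neg at h
    exact hs (Finset.eq_singleton_iff_unique_mem.mpr ⟨hmem, h⟩)
  obtain ⟨hbC, hrel⟩ := mem_comp.mp hb
  obtain ⟨u, hau, hbu⟩ : ∃ u, a.hasVar u ∧ b.hasVar u := by
    rcases hrel with rfl | ⟨u, h1, h2⟩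
    · exact absurd rfl hba
    · exact ⟨u, h1, h2⟩
  have hne : ∃ i, ∃ v, a.firstOccAt v i := by
    obtain ⟨i, hi⟩ := exists_firstOcc hau
    exact ⟨i, u, hi⟩
  set i₀ := Nat.find hne with hi₀def
  obtain ⟨u₀, hu₀⟩ := Nat.find_spec hne
  refine ⟨u₀, fun c hc => ?_⟩
  obtain ⟨hcC, hrelc⟩ := mem_comp.mp hc
  rcases hrelc with rfl | ⟨v, hav, hcv⟩
  · exact ⟨i₀, hu₀.1⟩
  obtain ⟨j, haj, hcj, hpre⟩ := hq v a ha c hcC hav hcv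
  have hle : i₀ ≤ j := Nat.find_min' hne ⟨v, haj⟩
  refine ⟨i₀, ?_⟩
  rw [Lit.varAt, ← hpre i₀ hle]
  exact hu₀.1

lemma isComponent_comp {C : Clause V K P} (hq : QEALMClause C) {a : Lit V K P}
    (ha : a ∈ C) : IsComponent (comp C a) C := by
  refine ⟨⟨a, self_mem_comp ha⟩, Finset.filter_subset _ _, insep_comp hq ha, ?_⟩
  rintro x hx b hb ⟨u, hxu, hbu⟩
  obtain ⟨hxC, hax⟩ := mem_comp.mp hx
  exact mem_comp.mpr ⟨hb, LRel.trans hq ha hxC hb hax (Or.inr ⟨u, hxu, hbu⟩)⟩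

lemma Lit.holds_congr (M : Model K P) {ρ₁ ρ₂ : V → M.Dom} (l : Lit V K P)
    (h : ∀ u, l.hasVar u → ρ₁ u = ρ₂ u) : l.holds M ρ₁ ↔ l.holds M ρ₂ := by
  have hmap : l.args.map (Trm.val M ρ₁) = l.args.map (Trm.val M ρ₂) := by
    apply List.map_congr_left
    intro t ht
    cases t with
    | const c => rfl
    | var u =>
      obtain ⟨i, hi⟩ := List.mem_iff_getElem?.mp ht
      exact h u ⟨i + 1, hi⟩
  unfold Lit.holds
  rw [hmap]

lemma exists_comp (M : Model K P) {C : Clause V K P} (hq : QEALMClause C)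
    (hC : ∀ ρ, C.holds M ρ) : ∃ a ∈ C, ∀ ρ, (comp C a).holds M ρ := by
  by_contra h
  push_neg at h
  let d : M.Dom := Classical.choice M.dne
  let F : Clause V K P → V → M.Dom := fun S =>
    if hS : ∃ ρ, ¬ S.holds M ρ then hS.choose else fun _ => d
  have hF : ∀ S : Clause V K P, (∃ ρ, ¬ S.holds M ρ) → ¬ S.holds M (F S) := by
    intro S hS
    simp only [F, dif_pos hS]
    exact hS.choose_spec
  let ρ : V → M.Dom := fun u =>
    if hu : ∃ l, l ∈ C ∧ l.hasVar u then F (comp C hu.choose) u else d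
  obtain ⟨b, hb, hbh⟩ := hC ρ
  apply hF (comp C b) (h b hb)
  refine ⟨b, self_mem_comp hb, ?_⟩
  rw [← Lit.holds_congr M b (ρ₂ := F (comp C b)) (ρ₁ := ρ) ?_]
  · exact hbh
  · intro u hu
    have hex : ∃ l, l ∈ C ∧ l.hasVar u := ⟨b, hb, hu⟩
    have : ρ u = F (comp C hex.choose) u := dif_pos hex
    rw [this]
    have hc := hex.choose_spec
    rw [comp_eq hq hb hc.1 (Or.inr ⟨u, hu, hc.2⟩)]

lemma forall₂_exists_mem {α β : Type*} {R : α → β → Prop} {l₁ : List α}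
    {l₂ : List β} (h : List.Forall₂ R l₁ l₂) :
    ∀ a ∈ l₁, ∃ b ∈ l₂, R a b := by
  induction h with
  | nil => intro a ha; simp at ha
  | cons hr _ ih =>
    intro a ha
    rcases List.mem_cons.mp ha with rfl | ha
    · exact ⟨_, List.mem_cons_self, hr⟩
    · obtain ⟨b, hb, hab⟩ := ih a ha
      exact ⟨b, List.mem_cons_of_mem _ hb, hab⟩

end Aux

/-- A CNF `φ` in the QEALM fragment is satisfiable iff there is a
choice of one component `K_C` of each clause `C` of `φ` such that the conjunction
of the chosen components is satisfiable. -/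
theorem statement_6 (φ : CNF V K P) (hq : QEALM φ) :
    CNF.Satisfiable φ ↔
      ∃ ψ : CNF V K P, List.Forall₂ (fun C Kc => IsComponent Kc C) φ ψ ∧
        CNF.Satisfiable ψ := by
  classical
  constructor
  · rintro ⟨M, hM⟩
    let g : Clause V K P → Clause V K P := fun C =>
      if h : ∃ a ∈ C, ∀ ρ, (comp C a).holds M ρ then comp C h.choose else ∅
    have hg : ∀ C ∈ φ, IsComponent (g C) C ∧ ∀ ρ, (g C).holds M ρ := by
      intro C hC
      have hh : ∃ a ∈ C, ∀ ρ, (comp C a).holds M ρ :=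
        exists_comp M (hq C hC) (fun ρ => hM ρ C hC)
      simp only [g, dif_pos hh]
      obtain ⟨ha, hr⟩ := hh.choose_spec
      exact ⟨isComponent_comp (hq C hC) ha, hr⟩
    refine ⟨φ.map g, ?_, M, ?_⟩
    · rw [List.forall₂_map_right_iff]
      exact List.forall₂_same.mpr (fun C hC => (hg C hC).1)
    · intro ρ D hD
      obtain ⟨C, hC, rfl⟩ := List.mem_map.mp hD
      exact (hg C hC).2 ρ
  · rintro ⟨ψ, hψ, M, hM⟩
    refine ⟨M, fun ρ C hC => ?_⟩
    obtain ⟨Kc, hKc, hcomp⟩ := forall₂_exists_mem hψ C hC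
    obtain ⟨l, hl, hh⟩ := hM ρ Kc hKc
    exact ⟨l, hcomp.2.1 hl, hh⟩
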